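/- Let K be a field, n ≥ 2, A = K[x₁,…,xₙ], and let e'_{ij} (1 ≤ i,j ≤ n) be a base collection of endomorphisms of A: a subbase of End A for which there exist z₁,…,zₙ ∈ A forming a base of A with image(e'_{ii}) ⊆ K[z_i] for every i. Then there exists a base z'₁,…,z'ₙ of A in which the e'_{ij} are exactly the Kronecker endomorphisms: e'_{ij}(z'_k) = z'_i if k = j and e'_{ij}(z'_k) = 0 if k ≠ j, for all i, j, k. -/

import Mathlib

open MvPolynomial

/-- The transcendence degree of an algebra `A` over `K`: the supremum of cardinalities of
algebraically independent subsets (mirrors Mathlib's `Algebra.trdeg`). -/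
noncomputable def algTrdeg (K A : Type*) [CommRing K] [CommRing A] [Algebra K A] : Cardinal :=
  ⨆ ι : { s : Set A // AlgebraicIndependent K ((↑) : s → A) }, Cardinal.mk ι.1


/-- The `K`-algebra endomorphism `Ô` of `K[x₁,…,xₙ]` sending every variable to `0`. -/
noncomputable def zeroEnd (K : Type) [Field K] (n : ℕ) :
    MvPolynomial (Fin n) K →ₐ[K] MvPolynomial (Fin n) K :=
  MvPolynomial.aeval fun _ : Fin n => (0 : MvPolynomial (Fin n) K)

/-- For every base collection `e'_{ij}` of endomorphisms of `K[x₁,…,xₙ]` there is a base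
`z'₁,…,z'ₙ` of `K[x₁,…,xₙ]` in which the `e'_{ij}` are the Kronecker endomorphisms. -/
theorem stmt_13 (K : Type) [Field K] (n : ℕ) (hn : 2 ≤ n)
    (e : Fin n → Fin n → (MvPolynomial (Fin n) K →ₐ[K] MvPolynomial (Fin n) K))
    (hne : ∀ i j, e i j ≠ zeroEnd K n)
    (hee : ∀ i j k l, (e i j).comp (e k l) = if j = k then e i l else zeroEnd K n)
    (hbase : ∃ z : Fin n → MvPolynomial (Fin n) K,
        Function.Bijective ⇑(MvPolynomial.aeval (R := K) z) ∧
        ∀ i, (e i i).range ≤ Algebra.adjoin K {z i}) :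
    ∃ z' : Fin n → MvPolynomial (Fin n) K,
      Function.Bijective ⇑(MvPolynomial.aeval (R := K) z') ∧
      ∀ i j k, e i j (z' k) = if k = j then z' i else 0 := by
  classical
  obtain ⟨z, hz, hr⟩ := hbase
  have hind : AlgebraicIndependent K z := hz.1
  have htr : ∀ i, Function.Injective ⇑(Polynomial.aeval (R := K) (z i)) := fun i =>
    transcendental_iff_injective.mp (hind.transcendental i)
  have h0n : 0 < n := by omega
  set i0 : Fin n := ⟨0, by omega⟩ with hi0def
  set i1 : Fin n := ⟨1, by omega⟩ with hi1def
  have hi01 : i1 ≠ i0 := by simp [hi0def, hi1def, Fin.ext_iff]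
  -- pointwise version of the composition law
  have happ : ∀ (i j k l : Fin n) (f : MvPolynomial (Fin n) K),
      e i j (e k l f) = if j = k then e i l f else zeroEnd K n f := by
    intro i j k l f
    rw [← AlgHom.comp_apply, hee i j k l]
    split_ifs <;> rfl
  have hid : ∀ (i : Fin n) (f : MvPolynomial (Fin n) K), e i i (e i i f) = e i i f := by
    intro i f; rw [happ, if_pos rfl]
  have hmem : ∀ (i : Fin n) (f : MvPolynomial (Fin n) K),
      ∃ q : Polynomial K, Polynomial.aeval (z i) q = e i i f := by
    intro i f
    have h : e i i f ∈ Algebra.adjoin K {z i} := hr i ⟨f, rfl⟩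
    rw [Algebra.adjoin_singleton_eq_range_aeval] at h
    exact h
  -- Step 1 : e i0 i0 (z i0) = z i0
  have hA : e i0 i0 (z i0) = z i0 := by
    obtain ⟨q, hq⟩ := hmem i0 (z i0)
    have hqq : Polynomial.aeval (z i0) (q.comp q) = Polynomial.aeval (z i0) q := by
      rw [Polynomial.aeval_comp, hq, Polynomial.aeval_algHom_apply (e i0 i0), hq,
        hid i0 (z i0)]
    have hcomp : q.comp q = q := htr i0 hqq
    have hd : q.natDegree ≠ 0 := by
      intro h0
      apply hne i0 i0
      have hqC : q = Polynomial.C (q.coeff 0) := Polynomial.eq_C_of_natDegree_eq_zero h0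
      apply AlgHom.ext; intro f
      obtain ⟨qf, hqf⟩ := hmem i0 f
      have h1 : e i0 i0 f = algebraMap K _ (Polynomial.eval (q.coeff 0) qf) := by
        conv_lhs => rw [← hid i0 f, ← hqf]
        rw [← Polynomial.aeval_algHom_apply (e i0 i0), ← hq, hqC, Polynomial.aeval_C,
          Polynomial.aeval_algebraMap_apply_eq_algebraMap_eval]
        simp
      have h2 : zeroEnd K n f = algebraMap K _ (Polynomial.eval (q.coeff 0) qf) := by
        have h3 := happ i1 i1 i0 i0 f
        rw [if_neg hi01] at h3
        rw [← h3, h1, AlgHom.commutes]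
      rw [h1, h2]
    have hd1 : q.natDegree = 1 := by
      have hnd := congrArg Polynomial.natDegree hcomp
      rw [Polynomial.natDegree_comp] at hnd
      nlinarith [Nat.pos_of_ne_zero hd]
    have hq1 : q = Polynomial.C (q.coeff 1) * Polynomial.X + Polynomial.C (q.coeff 0) :=
      Polynomial.eq_X_add_C_of_natDegree_le_one hd1.le
    have ha : q.coeff 1 ≠ 0 := by
      intro h0
      rw [hq1, h0] at hd1
      simp at hd1
    have hcc : Polynomial.C (q.coeff 1) * q + Polynomial.C (q.coeff 0) = q := by
      calc Polynomial.C (q.coeff 1) * q + Polynomial.C (q.coeff 0)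
          = (Polynomial.C (q.coeff 1) * Polynomial.X + Polynomial.C (q.coeff 0)).comp q := by
            simp [Polynomial.add_comp, Polynomial.mul_comp]
        _ = q.comp q := by rw [← hq1]
        _ = q := hcomp
    have ha1 : q.coeff 1 = 1 := by
      have hc1 := congrArg (fun p => Polynomial.coeff p 1) hcc
      simp [Polynomial.coeff_C] at hc1
      have : q.coeff 1 * q.coeff 1 = q.coeff 1 * 1 := by rw [mul_one]; exact hc1
      exact mul_left_cancel₀ ha this
    have hb0 : q.coeff 0 = 0 := by
      have hc0 := congrArg (fun p => Polynomial.coeff p 0) hcc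
      simp [Polynomial.coeff_C, ha1, add_eq_right] at hc0
      exact hc0
    rw [hq1, ha1, hb0] at hq
    simpa using hq.symm
  -- the constant shift
  set c : K := MvPolynomial.constantCoeff (z i0) with hcdef
  set u : MvPolynomial (Fin n) K := z i0 - MvPolynomial.C c with hudef
  have hzero : zeroEnd K n u = 0 := by
    simp only [zeroEnd, hudef, map_sub, MvPolynomial.aeval_zero', MvPolynomial.aeval_C,
      MvPolynomial.algebraMap_eq]
    rw [← hcdef, sub_self]
  -- Step 2 : each e k i0 u is affine in z k
  have hAff : ∀ k : Fin n, ∃ a b : K, a ≠ 0 ∧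
      e k i0 u = MvPolynomial.C a * z k + MvPolynomial.C b := by
    intro k
    have hm1 : e k i0 (z i0) = e k k (e k i0 (z i0)) := by rw [happ, if_pos rfl]
    obtain ⟨h, hh⟩ := hmem k (e k i0 (z i0))
    rw [← hm1] at hh
    have hm2 : e i0 k (z k) = e i0 i0 (e i0 k (z k)) := by rw [happ, if_pos rfl]
    obtain ⟨g, hg⟩ := hmem i0 (e i0 k (z k))
    rw [← hm2] at hg
    have hX : Polynomial.aeval (z i0) (h.comp g) = Polynomial.aeval (z i0) (Polynomial.X : Polynomial K) := by
      rw [Polynomial.aeval_comp, hg, Polynomial.aeval_X,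
        Polynomial.aeval_algHom_apply (e i0 k), hh, happ, if_pos rfl, hA]
    have hcompX : h.comp g = Polynomial.X := htr i0 hX
    have hdeg : h.natDegree = 1 := by
      have hnd := congrArg Polynomial.natDegree hcompX
      rw [Polynomial.natDegree_comp, Polynomial.natDegree_X] at hnd
      exact Nat.eq_one_of_mul_eq_one_right hnd
    have hh1 : h = Polynomial.C (h.coeff 1) * Polynomial.X + Polynomial.C (h.coeff 0) :=
      Polynomial.eq_X_add_C_of_natDegree_le_one hdeg.le
    have ha : h.coeff 1 ≠ 0 := by
      intro h0
      rw [hh1, h0] at hdeg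
      simp at hdeg
    refine ⟨h.coeff 1, h.coeff 0 - c, ha, ?_⟩
    have hC : e k i0 (MvPolynomial.C c) = MvPolynomial.C c := by
      rw [← MvPolynomial.algebraMap_eq, AlgHom.commutes]
    rw [hudef, map_sub, hC, ← hh, hh1]
    simp [MvPolynomial.algebraMap_eq]
    ring
  choose a b ha hab using hAff
  refine ⟨fun k => e k i0 u, ?_, ?_⟩
  · -- bijectivity
    have hw1 : (MvPolynomial.aeval (R := K)
          (fun i => MvPolynomial.C (a i)⁻¹ * (MvPolynomial.X i - MvPolynomial.C (b i)))).comp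
        (MvPolynomial.aeval (fun i => MvPolynomial.C (a i) * MvPolynomial.X i +
          MvPolynomial.C (b i))) = AlgHom.id K _ := by
      apply MvPolynomial.algHom_ext
      intro i
      simp only [AlgHom.comp_apply, MvPolynomial.aeval_X, map_add, map_mul, map_sub,
        MvPolynomial.aeval_C, MvPolynomial.algebraMap_eq, AlgHom.id_apply]
      rw [← mul_assoc, ← MvPolynomial.C_mul, mul_inv_cancel₀ (ha i), MvPolynomial.C_1,
        one_mul, sub_add_cancel]
    have hw2 : (MvPolynomial.aeval (R := K)
          (fun i => MvPolynomial.C (a i) * MvPolynomial.X i + MvPolynomial.C (b i))).comp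
        (MvPolynomial.aeval (fun i => MvPolynomial.C (a i)⁻¹ *
          (MvPolynomial.X i - MvPolynomial.C (b i)))) = AlgHom.id K _ := by
      apply MvPolynomial.algHom_ext
      intro i
      simp only [AlgHom.comp_apply, MvPolynomial.aeval_X, map_add, map_mul, map_sub,
        MvPolynomial.aeval_C, MvPolynomial.algebraMap_eq, AlgHom.id_apply]
      rw [add_sub_cancel_right, ← mul_assoc, ← MvPolynomial.C_mul, inv_mul_cancel₀ (ha i),
        MvPolynomial.C_1, one_mul]
    have hwb : Function.Bijective ⇑(MvPolynomial.aeval (R := K)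
        (fun i => MvPolynomial.C (a i) * MvPolynomial.X i + MvPolynomial.C (b i))) := by
      constructor
      · exact Function.LeftInverse.injective
          (g := ⇑(MvPolynomial.aeval (R := K)
            (fun i => MvPolynomial.C (a i)⁻¹ * (MvPolynomial.X i - MvPolynomial.C (b i)))))
          (fun f => by simpa using DFunLike.congr_fun hw1 f)
      · exact Function.RightInverse.surjective
          (g := ⇑(MvPolynomial.aeval (R := K)
            (fun i => MvPolynomial.C (a i)⁻¹ * (MvPolynomial.X i - MvPolynomial.C (b i)))))
          (fun f => by simpa using DFunLike.congr_fun hw2 f)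
    have hzeq : (MvPolynomial.aeval (R := K) (fun k => e k i0 u))
        = (MvPolynomial.aeval z).comp (MvPolynomial.aeval
          (fun i => MvPolynomial.C (a i) * MvPolynomial.X i + MvPolynomial.C (b i))) := by
      apply MvPolynomial.algHom_ext
      intro i
      simp only [AlgHom.comp_apply, MvPolynomial.aeval_X, map_add, map_mul,
        MvPolynomial.aeval_C, MvPolynomial.algebraMap_eq]
      exact hab i
    have hco : ⇑(MvPolynomial.aeval (R := K) (fun k => e k i0 u))
        = ⇑(MvPolynomial.aeval (R := K) z) ∘ ⇑(MvPolynomial.aeval (R := K)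
          (fun i => MvPolynomial.C (a i) * MvPolynomial.X i + MvPolynomial.C (b i))) := by
      rw [hzeq, AlgHom.coe_comp]
    rw [hco]
    exact hz.comp hwb
  · -- the Kronecker relations
    intro i j k
    show e i j (e k i0 u) = if k = j then e i i0 u else 0
    rw [happ i j k i0]
    by_cases hjk : j = k
    · subst hjk
      rw [if_pos rfl, if_pos rfl]
    · rw [if_neg hjk, if_neg (fun h => hjk h.symm), hzero]
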